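/- Let h(z) = 1 + κ|z|², let Ω = {z ∈ ℂ : h(z) > 0}, and let D be the operator (D g)(z) = h(z)² (∂g/∂z)(z). Then for every integer m ≥ 0, every function f smooth on Ω, and every z ∈ Ω, m · h(z) · κ z̄ · (D^m f)(z) + h(z) · D^m[w ↦ h(w)^{−1} (D f)(w)](z) = (D^{m+1} f)(z). (Here κ z̄ = (∂h/∂z)(z).) -/

import Mathlib

open Complex MeasureTheory Filter

/-- Wirtinger derivative ∂f/∂z = (1/2)(∂f/∂x − i ∂f/∂y). -/
noncomputable def wderiv (f : ℂ → ℂ) (z : ℂ) : ℂ :=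
  (fderiv ℝ f z 1 - Complex.I * fderiv ℝ f z Complex.I) / 2

/-- Anti-holomorphic Wirtinger derivative ∂f/∂z̄ = (1/2)(∂f/∂x + i ∂f/∂y). -/
noncomputable def wderivBar (f : ℂ → ℂ) (z : ℂ) : ℂ :=
  (fderiv ℝ f z 1 + Complex.I * fderiv ℝ f z Complex.I) / 2

/-- Twisted Laplacian L_κ^ν. -/
noncomputable def twistedLap (κ ν : ℝ) (f : ℂ → ℂ) (z : ℂ) : ℂ :=
  -(((1 + κ * Complex.normSq z : ℝ) : ℂ) ^ 2 * wderiv (wderivBar f) z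
    + (ν : ℂ) * ((1 + κ * Complex.normSq z : ℝ) : ℂ) *
        (z * wderiv f z - (starRingEnd ℂ) z * wderivBar f z)
    - (ν : ℂ) ^ 2 * ((Complex.normSq z : ℝ) : ℂ) * f z)

/-- (∇_α f)(z) = −(1+κ|z|²) ∂f/∂z + α z̄ f(z). -/
noncomputable def nabla (κ α : ℝ) (f : ℂ → ℂ) (z : ℂ) : ℂ :=
  -((1 + κ * Complex.normSq z : ℝ) : ℂ) * wderiv f z + (α : ℂ) * (starRingEnd ℂ) z * f z

/-- (∇*_α f)(z) = (1+κ|z|²) ∂f/∂z̄ + (α−κ) z f(z). -/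
noncomputable def nablaStar (κ α : ℝ) (f : ℂ → ℂ) (z : ℂ) : ℂ :=
  ((1 + κ * Complex.normSq z : ℝ) : ℂ) * wderivBar f z + ((α - κ : ℝ) : ℂ) * z * f z

/-- ∇_{ν+κ} ∘ ∇_{ν+2κ} ∘ ⋯ ∘ ∇_{ν+mκ} (the identity when m = 0). -/
noncomputable def nablaChain (κ : ℝ) : ℕ → ℝ → (ℂ → ℂ) → (ℂ → ℂ)
  | 0, _, f => f
  | m + 1, ν, f => nabla κ (ν + κ) (nablaChain κ m (ν + κ) f)

/-- (D g)(z) = (1+κ|z|²)² ∂g/∂z. -/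
noncomputable def Dop (κ : ℝ) (g : ℂ → ℂ) (z : ℂ) : ℂ :=
  ((1 + κ * Complex.normSq z : ℝ) : ℂ) ^ 2 * wderiv g z

/-- Generalized binomial coefficient C(r,k) for real r. -/
noncomputable def genBinom (r : ℝ) (k : ℕ) : ℝ :=
  (∏ i ∈ Finset.range k, (r - i)) / (Nat.factorial k)

/-- Jacobi polynomial P_j^{(a,b)}(x) with real parameters a, b. -/
noncomputable def jacobiP (a b : ℝ) (j : ℕ) (x : ℝ) : ℝ :=
  ∑ s ∈ Finset.range (j + 1),
    genBinom ((j : ℝ) + a) (j - s) * genBinom ((j : ℝ) + b) s *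
      ((x - 1) / 2) ^ s * ((x + 1) / 2) ^ (j - s)

/-- Pochhammer symbol (a)_n = a(a+1)⋯(a+n−1). -/
noncomputable def risingFactorial (a : ℝ) (n : ℕ) : ℝ :=
  ∏ i ∈ Finset.range n, (a + i)

section helpers
variable {f g : ℂ → ℂ} {z : ℂ}

private lemma wderiv_congr (h : f =ᶠ[nhds z] g) : wderiv f z = wderiv g z := by
  unfold wderiv; rw [h.fderiv_eq]

private lemma wderiv_add (hf : DifferentiableAt ℝ f z) (hg : DifferentiableAt ℝ g z) :
    wderiv (fun w => f w + g w) z = wderiv f z + wderiv g z := by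
  unfold wderiv; rw [fderiv_fun_add hf hg]; simp; ring

private lemma wderiv_mul (hf : DifferentiableAt ℝ f z) (hg : DifferentiableAt ℝ g z) :
    wderiv (fun w => f w * g w) z = wderiv f z * g z + f z * wderiv g z := by
  unfold wderiv; rw [fderiv_fun_mul hf hg]; simp [smul_eq_mul]; ring

private lemma wderiv_const_mul (c : ℂ) (hf : DifferentiableAt ℝ f z) :
    wderiv (fun w => c * f w) z = c * wderiv f z := by
  unfold wderiv; rw [fderiv_const_mul hf]; simp [smul_eq_mul]; ring

private lemma wderiv_id' : wderiv (fun w : ℂ => w) z = 1 := by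
  unfold wderiv; rw [fderiv_id']; simp [Complex.I_mul_I]

private lemma conj_eq_clm : (fun w : ℂ => (starRingEnd ℂ) w)
    = ⇑Complex.conjCLE.toContinuousLinearMap := rfl

private lemma wderiv_conj : wderiv (fun w : ℂ => (starRingEnd ℂ) w) z = 0 := by
  unfold wderiv
  rw [conj_eq_clm, ContinuousLinearMap.fderiv]
  simp

/-- h as a complex-valued function. -/
private noncomputable def Hfun (κ : ℝ) (z : ℂ) : ℂ := ((1 + κ * Complex.normSq z : ℝ) : ℂ)

private lemma Hfun_eq (κ : ℝ) :
    Hfun κ = fun w : ℂ => 1 + (κ : ℂ) * (w * (starRingEnd ℂ) w) := by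
  funext w
  simp only [Hfun, Complex.mul_conj]
  push_cast
  ring

private lemma Hfun_contDiff (κ : ℝ) : ContDiff ℝ (⊤ : ℕ∞) (Hfun κ) := by
  rw [Hfun_eq]
  have hc : ContDiff ℝ (⊤ : ℕ∞) (fun w : ℂ => (starRingEnd ℂ) w) := by
    rw [conj_eq_clm]; exact Complex.conjCLE.toContinuousLinearMap.contDiff
  exact contDiff_const.add (contDiff_const.mul (contDiff_id.mul hc))

private lemma Hfun_diff (κ : ℝ) (z : ℂ) : DifferentiableAt ℝ (Hfun κ) z :=
  ((Hfun_contDiff κ).differentiable (by simp)) z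

private lemma conj_diff (z : ℂ) : DifferentiableAt ℝ (fun w : ℂ => (starRingEnd ℂ) w) z := by
  rw [conj_eq_clm]; exact Complex.conjCLE.toContinuousLinearMap.differentiableAt

private lemma wderiv_Hfun (κ : ℝ) (z : ℂ) : wderiv (Hfun κ) z = (κ : ℂ) * (starRingEnd ℂ) z := by
  rw [Hfun_eq]
  have h1 : wderiv (fun w : ℂ => (1 : ℂ)) z = 0 := by
    unfold wderiv; rw [fderiv_fun_const]; simp
  have hdm : DifferentiableAt ℝ (fun w : ℂ => w * (starRingEnd ℂ) w) z :=
    differentiableAt_fun_id.mul (conj_diff z)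
  have := wderiv_add (f := fun _ : ℂ => (1:ℂ)) (g := fun w => (κ:ℂ) * (w * (starRingEnd ℂ) w))
    (differentiableAt_const _) (hdm.const_mul _)
  rw [this, h1, wderiv_const_mul _ hdm,
    wderiv_mul differentiableAt_fun_id (conj_diff z), wderiv_id', wderiv_conj]
  ring

/-- the Wirtinger derivative of a smooth-on-open-set function is smooth there. -/
private lemma contDiffOn_wderiv {s : Set ℂ} (hs : IsOpen s)
    (hg : ContDiffOn ℝ (⊤ : ℕ∞) g s) : ContDiffOn ℝ (⊤ : ℕ∞) (fun z => wderiv g z) s := by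
  have h1 : ContDiffOn ℝ (⊤ : ℕ∞) (fderiv ℝ g) s := hg.fderiv_of_isOpen hs (by simp)
  have h2 : ContDiffOn ℝ (⊤ : ℕ∞) (fun z => fderiv ℝ g z 1) s := h1.clm_apply contDiffOn_const
  have h3 : ContDiffOn ℝ (⊤ : ℕ∞) (fun z => fderiv ℝ g z Complex.I) s :=
    h1.clm_apply contDiffOn_const
  exact ((h2.sub (contDiffOn_const.mul h3)).div_const 2)

private lemma contDiffOn_Dop {κ : ℝ} {s : Set ℂ} (hs : IsOpen s)
    (hg : ContDiffOn ℝ (⊤ : ℕ∞) g s) : ContDiffOn ℝ (⊤ : ℕ∞) (Dop κ g) s := by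
  have : Dop κ g = fun z => (Hfun κ z) ^ 2 * wderiv g z := rfl
  rw [this]
  exact (((Hfun_contDiff κ).pow 2).contDiffOn).mul (contDiffOn_wderiv hs hg)

end helpers

theorem stmt17 (κ : ℝ) (m : ℕ) (f : ℂ → ℂ)
    (hf : ContDiffOn ℝ (⊤ : ℕ∞) f {z : ℂ | 0 < 1 + κ * Complex.normSq z})
    (z : ℂ) (hz : 0 < 1 + κ * Complex.normSq z) :
    (m : ℂ) * ((1 + κ * Complex.normSq z : ℝ) : ℂ) * ((κ : ℂ) * (starRingEnd ℂ) z) *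
          (Dop κ)^[m] f z
        + ((1 + κ * Complex.normSq z : ℝ) : ℂ) *
          (Dop κ)^[m]
            (fun w => (((1 + κ * Complex.normSq w : ℝ) : ℂ))⁻¹ * Dop κ f w) z
      = (Dop κ)^[m + 1] f z := by
  set Ω : Set ℂ := {z : ℂ | 0 < 1 + κ * Complex.normSq z} with hΩdef
  have hΩ : IsOpen Ω := by
    have : Continuous fun z : ℂ => 1 + κ * Complex.normSq z :=
      continuous_const.add (continuous_const.mul Complex.continuous_normSq)
    exact isOpen_lt continuous_const this
  have hHne : ∀ w ∈ Ω, Hfun κ w ≠ 0 := fun w hw =>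
    Complex.ofReal_ne_zero.mpr (ne_of_gt hw)
  -- the function g = h⁻¹ · D f
  set G : ℂ → ℂ := fun w => (Hfun κ w)⁻¹ * Dop κ f w with hGdef
  have hG : ContDiffOn ℝ (⊤ : ℕ∞) G Ω :=
    (((Hfun_contDiff κ).contDiffOn).inv hHne).mul (contDiffOn_Dop hΩ hf)
  -- iterates are smooth
  have hIter : ∀ (u : ℂ → ℂ), ContDiffOn ℝ (⊤ : ℕ∞) u Ω →
      ∀ n, ContDiffOn ℝ (⊤ : ℕ∞) ((Dop κ)^[n] u) Ω := by
    intro u hu n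
    induction n with
    | zero => exact hu
    | succ n ih => rw [Function.iterate_succ_apply']; exact contDiffOn_Dop hΩ ih
  have hDiffAt : ∀ (u : ℂ → ℂ), ContDiffOn ℝ (⊤ : ℕ∞) u Ω → ∀ w ∈ Ω,
      DifferentiableAt ℝ u w := by
    intro u hu w hw
    exact (hu.contDiffAt (hΩ.mem_nhds hw)).differentiableAt (by simp)
  -- Main claim by induction on m, for all points of Ω
  have main : ∀ n : ℕ, ∀ w ∈ Ω,
      (n : ℂ) * Hfun κ w * ((κ : ℂ) * (starRingEnd ℂ) w) * (Dop κ)^[n] f w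
        + Hfun κ w * (Dop κ)^[n] G w = (Dop κ)^[n + 1] f w := by
    intro n
    induction n with
    | zero =>
      intro w hw
      simp only [Function.iterate_zero_apply, Function.iterate_one, Nat.cast_zero]
      rw [hGdef]
      field_simp [hHne w hw]
      simp
    | succ n ih =>
      intro w hw
      -- φ : the function equal to D^[n+1] f on Ω
      set φ : ℂ → ℂ := fun x =>
        (n : ℂ) * Hfun κ x * ((κ : ℂ) * (starRingEnd ℂ) x) * (Dop κ)^[n] f x
          + Hfun κ x * (Dop κ)^[n] G x with hφdef
      have hEq : (Dop κ)^[n + 1] f =ᶠ[nhds w] φ := by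
        filter_upwards [hΩ.mem_nhds hw] with x hx
        exact (ih x hx).symm
      have hstep : (Dop κ)^[n + 1 + 1] f w = Dop κ φ w := by
        rw [Function.iterate_succ_apply']
        show (Hfun κ w) ^ 2 * wderiv ((Dop κ)^[n+1] f) w = (Hfun κ w) ^ 2 * wderiv φ w
        rw [wderiv_congr hEq]
      -- differentiability facts at w
      have hu : DifferentiableAt ℝ ((Dop κ)^[n] f) w := hDiffAt _ (hIter f hf n) w hw
      have hv : DifferentiableAt ℝ ((Dop κ)^[n] G) w := hDiffAt _ (hIter G hG n) w hw
      have hH := Hfun_diff κ w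
      have hK : DifferentiableAt ℝ (fun x : ℂ => (κ : ℂ) * (starRingEnd ℂ) x) w :=
        (conj_diff w).const_mul _
      -- compute wderiv φ w
      have hwK : wderiv (fun x : ℂ => (κ : ℂ) * (starRingEnd ℂ) x) w = 0 := by
        rw [wderiv_const_mul _ (conj_diff w), wderiv_conj, mul_zero]
      have hA : DifferentiableAt ℝ (fun x =>
          (n : ℂ) * Hfun κ x * ((κ : ℂ) * (starRingEnd ℂ) x) * (Dop κ)^[n] f x) w :=
        (((hH.const_mul _).mul hK).mul hu)
      have hB : DifferentiableAt ℝ (fun x => Hfun κ x * (Dop κ)^[n] G x) w := hH.mul hv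
      have hφw : wderiv φ w =
          (n : ℂ) * (((κ:ℂ) * (starRingEnd ℂ) w) * ((κ:ℂ) * (starRingEnd ℂ) w)
              * (Dop κ)^[n] f w
            + Hfun κ w * ((κ:ℂ) * (starRingEnd ℂ) w) * wderiv ((Dop κ)^[n] f) w)
          + (((κ:ℂ) * (starRingEnd ℂ) w) * (Dop κ)^[n] G w
            + Hfun κ w * wderiv ((Dop κ)^[n] G) w) := by
        rw [hφdef]
        rw [wderiv_add hA hB]
        have e1 : (fun x => (n : ℂ) * Hfun κ x * ((κ : ℂ) * (starRingEnd ℂ) x)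
            * (Dop κ)^[n] f x)
            = fun x => ((n : ℂ) * Hfun κ x * ((κ : ℂ) * (starRingEnd ℂ) x))
              * (Dop κ)^[n] f x := rfl
        rw [e1, wderiv_mul (f := fun x => (n : ℂ) * Hfun κ x * ((κ : ℂ) * (starRingEnd ℂ) x)) ((hH.const_mul _).mul hK) hu]
        have e2 : (fun x => (n : ℂ) * Hfun κ x * ((κ : ℂ) * (starRingEnd ℂ) x))
            = fun x => ((n : ℂ) * Hfun κ x) * ((κ : ℂ) * (starRingEnd ℂ) x) := rfl
        rw [e2, wderiv_mul (hH.const_mul _) hK, hwK,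
          wderiv_const_mul _ hH, wderiv_Hfun,
          wderiv_mul hH hv, wderiv_Hfun]
        ring
      -- now assemble
      have hDφ : Dop κ φ w =
          (n : ℂ) * ((Hfun κ w)^2 * ((κ:ℂ) * (starRingEnd ℂ) w) * ((κ:ℂ) * (starRingEnd ℂ) w)
              * (Dop κ)^[n] f w
            + Hfun κ w * ((κ:ℂ) * (starRingEnd ℂ) w) * (Dop κ)^[n+1] f w)
          + ((Hfun κ w)^2 * ((κ:ℂ) * (starRingEnd ℂ) w) * (Dop κ)^[n] G w
            + Hfun κ w * (Dop κ)^[n+1] G w) := by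
        show (Hfun κ w) ^ 2 * wderiv φ w = _
        rw [hφw, Function.iterate_succ_apply', Function.iterate_succ_apply']
        show _ = (n : ℂ) * (_ + Hfun κ w * ((κ:ℂ) * (starRingEnd ℂ) w)
            * ((Hfun κ w)^2 * wderiv ((Dop κ)^[n] f) w))
          + (_ + Hfun κ w * ((Hfun κ w)^2 * wderiv ((Dop κ)^[n] G) w))
        ring
      have hIH := ih w hw
      rw [hstep, hDφ]
      push_cast
      rw [← hIH]
      ring
  have := main m z hz
  exact this
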